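/- Let Γ be a smooth closed surface in ℝ³ with outward unit normal ν, extended Weingarten map A = ∇_Γ ν (a symmetric matrix field with Aν = 0), and mean curvature H = trace(A). Then for any smooth function f on Γ, the componentwise Laplace–Beltrami operator satisfies the commutator formula Δ_Γ ∇_Γ f − ∇_Γ Δ_Γ f = (H A − A²) ∇_Γ f + (Δ_Γ ν · ∇_Γ f) ν − 2 (∇_Γ · (A ∇_Γ f)) ν − A² ∇_Γ f. -/
import Mathlib


/-- **Commutator formula, Lemma 2.2.** On a smooth closed surface `Γ ⊂ ℝ³` with
outward unit normal `ν`, extended Weingarten map `A = ∇_Γ ν` (symmetric, `Aν = 0`), and mean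
curvature `H = tr A`, the componentwise tangential derivatives `D i` (satisfying the Leibniz
rule, additivity, the tangential commutator relation
`D_i D_j u − D_j D_i u = A_{jk} D_k u ν_i − A_{ik} D_k u ν_j`, tangency `ν · ∇_Γ u = 0`,
and `|ν| = 1`) satisfy, for any smooth `f : Γ → ℝ`,
`Δ_Γ ∇_Γ f − ∇_Γ Δ_Γ f
  = (H A − A²) ∇_Γ f + (Δ_Γ ν · ∇_Γ f) ν − 2 (∇_Γ · (A ∇_Γ f)) ν − A² ∇_Γ f`
componentwise, where `Δ_Γ u = ∑ i, D i (D i u)`, `A i j = D i (ν j)`, `H = ∑ i, A i i`. -/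
theorem commutator_gradient_laplace
    {Γ : Type*}
    (D : Fin 3 → (Γ → ℝ) → (Γ → ℝ))
    (ν : Fin 3 → Γ → ℝ) (f : Γ → ℝ)
    (hadd : ∀ i (u v : Γ → ℝ), D i (u + v) = D i u + D i v)
    (hmul : ∀ i (u v : Γ → ℝ), D i (u * v) = D i u * v + u * D i v)
    (hcomm : ∀ i j (u : Γ → ℝ) (x : Γ),
      D i (D j u) x - D j (D i u) x
        = (∑ k, D j (ν k) x * D k u x) * ν i x - (∑ k, D i (ν k) x * D k u x) * ν j x)
    (hsymm : ∀ i j, D i (ν j) = D j (ν i))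
    (hunit : ∀ x, ∑ i, ν i x * ν i x = 1)
    (hAν : ∀ i (x : Γ), ∑ j, D i (ν j) x * ν j x = 0)
    (htang : ∀ (u : Γ → ℝ) (x : Γ), ∑ i, ν i x * D i u x = 0) :
    ∀ j (x : Γ),
      (∑ i, D i (D i (D j f)) x) - D j (fun y => ∑ i, D i (D i f) y) x
        = (∑ k, ((∑ i, D i (ν i) x) * D j (ν k) x
              - ∑ l, D j (ν l) x * D l (ν k) x) * D k f x)
          + (∑ k, (∑ i, D i (D i (ν k)) x) * D k f x) * ν j x
          - 2 * (∑ i, D i (fun y => ∑ k, D i (ν k) y * D k f y) x) * ν j x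
          - ∑ k, (∑ l, D j (ν l) x * D l (ν k) x) * D k f x := by
  classical
  -- D kills 0
  have hzero : ∀ i, D i (0 : Γ → ℝ) = 0 := by
    intro i
    have h := hadd i 0 0
    rw [add_zero] at h
    exact (add_eq_left.mp h.symm)
  -- D is additive over finite sums
  have hsum : ∀ i (g : Fin 3 → Γ → ℝ), D i (∑ k, g k) = ∑ k, D i (g k) := by
    intro i g
    exact map_sum (⟨⟨D i, hzero i⟩, hadd i⟩ : (Γ → ℝ) →+ (Γ → ℝ)) g Finset.univ
  have hsub : ∀ i (u v : Γ → ℝ), D i (u - v) = D i u - D i v := by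
    intro i u v
    have h := hadd i (u - v) v
    rw [sub_add_cancel] at h
    exact eq_sub_of_add_eq h.symm
  -- the vector field B m = A row m applied to ∇f, as a function
  set B : Fin 3 → Γ → ℝ := fun m => ∑ k, D m (ν k) * D k f with hBdef
  have hBapp : ∀ m y, B m y = ∑ k, D m (ν k) y * D k f y := by
    intro m y; simp [hBdef, Finset.sum_apply]
  have hBfun : ∀ m, (fun y => ∑ k, D m (ν k) y * D k f y) = B m := by
    intro m; funext y; rw [hBapp]
  -- differentiated tangency: ∑ i ν i (D k D i u) = - ∑ i (D k ν i) (D i u)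
  have nuD : ∀ (u : Γ → ℝ) (k : Fin 3) (x : Γ),
      ∑ i, ν i x * D k (D i u) x = - ∑ i, D k (ν i) x * D i u x := by
    intro u k x
    have h0 : (∑ i, ν i * D i u) = (0 : Γ → ℝ) := by
      funext y
      simpa [Finset.sum_apply] using htang u y
    have h1 : D k (∑ i, ν i * D i u) x = 0 := by rw [h0, hzero]; rfl
    rw [hsum] at h1
    have h2 : ∀ i : Fin 3, D k (ν i * D i u) x
        = D k (ν i) x * D i u x + ν i x * D k (D i u) x := by
      intro i
      have := congrFun (hmul k (ν i) (D i u)) x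
      simpa using this
    rw [Finset.sum_apply] at h1
    rw [Finset.sum_congr rfl (fun i _ => h2 i), Finset.sum_add_distrib] at h1
    linarith
  intro j x
  -- Step A: pull D j inside the sum defining Δf
  have stepA : D j (fun y => ∑ i, D i (D i f) y) x = ∑ i, D j (D i (D i f)) x := by
    have h : (fun y => ∑ i, D i (D i f) y) = ∑ i, D i (D i f) := by
      funext y; simp [Finset.sum_apply]
    rw [h, hsum, Finset.sum_apply]
  -- commutator on f, as a function identity
  have comm_f : ∀ i, D i (D j f) = D j (D i f) + (B j * ν i - B i * ν j) := by
    intro i; funext y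
    have h := hcomm i j f y
    simp only [Pi.add_apply, Pi.sub_apply, Pi.mul_apply, hBapp]
    linarith
  -- per-index identity
  have per_i : ∀ i, D i (D i (D j f)) x - D j (D i (D i f)) x
      = D i (B j) x * ν i x + B j x * D i (ν i) x
        - (D i (B i) x * ν j x + B i x * D i (ν j) x)
        + ((∑ k, D j (ν k) x * D k (D i f) x) * ν i x
           - (∑ k, D i (ν k) x * D k (D i f) x) * ν j x) := by
    intro i
    have key1 : D i (D i (D j f)) = D i (D j (D i f)) + (D i (B j * ν i) - D i (B i * ν j)) := by
      rw [comm_f i, hadd, hsub]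
    have h1 := congrFun key1 x
    have h2 := hcomm i j (D i f) x
    have h3 := congrFun (hmul i (B j) (ν i)) x
    have h4 := congrFun (hmul i (B i) (ν j)) x
    simp only [Pi.add_apply, Pi.sub_apply, Pi.mul_apply] at h1 h3 h4
    linarith
  -- total sum, split into six pieces
  have total : (∑ i, D i (D i (D j f)) x) - D j (fun y => ∑ i, D i (D i f) y) x
      = (∑ i, D i (B j) x * ν i x) + (∑ i, B j x * D i (ν i) x)
        - (∑ i, D i (B i) x) * ν j x - (∑ i, B i x * D i (ν j) x)
        + (∑ i, (∑ k, D j (ν k) x * D k (D i f) x) * ν i x)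
        - (∑ i, ∑ k, D i (ν k) x * D k (D i f) x) * ν j x := by
    rw [stepA, ← Finset.sum_sub_distrib, Finset.sum_congr rfl (fun i _ => per_i i)]
    simp only [Finset.sum_add_distrib, Finset.sum_sub_distrib, Finset.sum_mul]
    ring
  -- S1: tangency kills the first sum
  have S1 : ∑ i, D i (B j) x * ν i x = 0 := by
    have h := htang (B j) x
    calc ∑ i, D i (B j) x * ν i x = ∑ i, ν i x * D i (B j) x := by
          exact Finset.sum_congr rfl (fun i _ => mul_comm _ _)
      _ = 0 := h
  -- S4: the A²∇f term
  have S4 : ∑ i, B i x * D i (ν j) x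
      = ∑ k, (∑ l, D j (ν l) x * D l (ν k) x) * D k f x := by
    calc ∑ i, B i x * D i (ν j) x
        = ∑ i, ∑ k, D j (ν i) x * D i (ν k) x * D k f x := by
          refine Finset.sum_congr rfl (fun i _ => ?_)
          rw [hBapp, Finset.sum_mul, hsymm i j]
          exact Finset.sum_congr rfl (fun k _ => by ring)
      _ = ∑ k, (∑ l, D j (ν l) x * D l (ν k) x) * D k f x := by
          rw [Finset.sum_comm]
          exact Finset.sum_congr rfl (fun k _ => by rw [Finset.sum_mul])
  -- S5: the second commutator tangential part
  have S5 : ∑ i, (∑ k, D j (ν k) x * D k (D i f) x) * ν i x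
      = - ∑ k, (∑ l, D j (ν l) x * D l (ν k) x) * D k f x := by
    have n0 := nuD f 0 x
    have n1 := nuD f 1 x
    have n2 := nuD f 2 x
    simp only [Fin.sum_univ_three] at n0 n1 n2 ⊢
    linear_combination (D j (ν 0) x) * n0 + (D j (ν 1) x) * n1 + (D j (ν 2) x) * n2
  -- S6: swap second-derivative indices using symmetry of A
  have S6 : ∑ i, ∑ k, D i (ν k) x * D k (D i f) x
      = ∑ i, ∑ k, D i (ν k) x * D i (D k f) x := by
    rw [Finset.sum_comm]
    refine Finset.sum_congr rfl (fun k _ => Finset.sum_congr rfl (fun i _ => ?_))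
    rw [hsymm k i]
  -- expansion of divergence of A ∇f
  have S3exp : ∑ i, D i (B i) x
      = (∑ k, (∑ i, D i (D i (ν k)) x) * D k f x)
        + ∑ i, ∑ k, D i (ν k) x * D i (D k f) x := by
    have hexp : ∀ i, D i (B i) x
        = ∑ k, (D i (D i (ν k)) x * D k f x + D i (ν k) x * D i (D k f) x) := by
      intro i
      rw [hBdef]
      rw [hsum, Finset.sum_apply]
      refine Finset.sum_congr rfl (fun k _ => ?_)
      have := congrFun (hmul i (D i (ν k)) (D k f)) x
      simpa using this
    rw [Finset.sum_congr rfl (fun i _ => hexp i)]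
    simp only [Finset.sum_add_distrib]
    congr 1
    rw [Finset.sum_comm]
    exact Finset.sum_congr rfl (fun k _ => by rw [Finset.sum_mul])
  -- rewrite the goal's divergence term
  have hgoalB : ∀ i, D i (fun y => ∑ k, D i (ν k) y * D k f y) = D i (B i) := by
    intro i; rw [hBfun i]
  -- the first RHS term splits
  have T1 : (∑ k, ((∑ i, D i (ν i) x) * D j (ν k) x
        - ∑ l, D j (ν l) x * D l (ν k) x) * D k f x)
      = B j x * (∑ i, D i (ν i) x)
        - ∑ k, (∑ l, D j (ν l) x * D l (ν k) x) * D k f x := by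
    rw [hBapp, Finset.sum_mul, ← Finset.sum_sub_distrib]
    refine Finset.sum_congr rfl (fun k _ => by rw [sub_mul]; ring)
  -- finish
  rw [total, Finset.sum_congr rfl (fun i _ => congrFun (hgoalB i) x), T1, S1, S4, S5, S6]
  have hMul : ∀ i : Fin 3, B j x * D i (ν i) x = D i (ν i) x * B j x := fun i => mul_comm _ _
  rw [Finset.sum_congr rfl (fun i _ => hMul i), ← Finset.sum_mul]
  linear_combination (ν j x) * S3exp
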